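/- Let K ≥ 2, δ ∈ [0,1], and v = (1/(K−1))·(1 − (1−δ)^K/K). Then v ≥ 1/K + δ/(K−1) − δ²/2, and if additionally δ ≤ 2/(K(K−1)), then v ≥ (1+δ)/K. -/

import Mathlib

lemma pow_bound (K : ℕ) (δ : ℝ) (h0 : 0 ≤ δ) (h1 : δ ≤ 1) :
    (1 - δ) ^ K ≤ 1 - K * δ + (K * ((K : ℝ) - 1) / 2) * δ ^ 2 := by
  induction K with
  | zero => simp
  | succ n ih =>
    have hx : (0 : ℝ) ≤ 1 - δ := by linarith
    have hmul := mul_le_mul_of_nonneg_left ih hx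
    push_cast
    push_cast at hmul
    have hδ3 : 0 ≤ δ ^ 2 * δ := by positivity
    have hn : (0 : ℝ) ≤ n := Nat.cast_nonneg n
    calc (1 - δ) ^ (n + 1) = (1 - δ) * (1 - δ) ^ n := by ring
      _ ≤ (1 - δ) * (1 - n * δ + (n * ((n : ℝ) - 1) / 2) * δ ^ 2) := hmul
      _ ≤ 1 - (n + 1) * δ + ((n + 1) * ((n : ℝ) + 1 - 1) / 2) * δ ^ 2 := by
          have hnn : 0 ≤ (n : ℝ) * ((n : ℝ) - 1) := by
            rcases Nat.eq_zero_or_pos n with h | h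
            · simp [h]
            · have : (1 : ℝ) ≤ (n : ℝ) := by exact_mod_cast h
              nlinarith
          nlinarith [mul_nonneg hnn hδ3]

/-- Bounds on `v = (1/(K−1))·(1 − (1−δ)^K/K)`. -/
theorem stmt2 (K : ℕ) (hK : 2 ≤ K) (δ : ℝ) (hδ0 : 0 ≤ δ) (hδ1 : δ ≤ 1) :
    (1 / ((K : ℝ) - 1)) * (1 - (1 - δ) ^ K / K) ≥ 1 / K + δ / ((K : ℝ) - 1) - δ ^ 2 / 2 ∧
    (δ ≤ 2 / ((K : ℝ) * ((K : ℝ) - 1)) →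
      (1 / ((K : ℝ) - 1)) * (1 - (1 - δ) ^ K / K) ≥ (1 + δ) / K) := by
  have hK2 : (2 : ℝ) ≤ (K : ℝ) := by exact_mod_cast hK
  have hKpos : (0 : ℝ) < (K : ℝ) := by linarith
  have hKm1 : (0 : ℝ) < (K : ℝ) - 1 := by linarith
  have key := pow_bound K δ hδ0 hδ1
  have e : (1 / ((K : ℝ) - 1)) * (1 - (1 - δ) ^ K / K)
      = ((K : ℝ) - (1 - δ) ^ K) / ((K : ℝ) * ((K : ℝ) - 1)) := by
    have h1 : (K:ℝ) ≠ 0 := ne_of_gt hKpos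
    have h2 : (K:ℝ) - 1 ≠ 0 := ne_of_gt hKm1
    rw [eq_div_iff (mul_ne_zero h1 h2)]
    field_simp
  have part1 : (1 / ((K : ℝ) - 1)) * (1 - (1 - δ) ^ K / K)
      ≥ 1 / K + δ / ((K : ℝ) - 1) - δ ^ 2 / 2 := by
    rw [ge_iff_le, e, le_div_iff₀ (by positivity)]
    have expand : (1 / (K : ℝ) + δ / ((K : ℝ) - 1) - δ ^ 2 / 2) * ((K : ℝ) * ((K : ℝ) - 1))
        = ((K : ℝ) - 1) + (K : ℝ) * δ - ((K : ℝ) * ((K : ℝ) - 1) / 2) * δ ^ 2 := by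
      field_simp
    rw [expand]
    linarith [key]
  refine ⟨part1, fun hδ => ?_⟩
  have hδ' : δ * ((K : ℝ) * ((K : ℝ) - 1)) ≤ 2 := by
    rw [← le_div_iff₀ (by positivity)]; exact hδ
  have diff : 1 / (K : ℝ) + δ / ((K : ℝ) - 1) - δ ^ 2 / 2 - (1 + δ) / K
      = δ * (2 - δ * ((K : ℝ) * ((K : ℝ) - 1))) / (2 * ((K : ℝ) * ((K : ℝ) - 1))) := by
    field_simp; ring
  have hnn : 0 ≤ δ * (2 - δ * ((K : ℝ) * ((K : ℝ) - 1))) / (2 * ((K : ℝ) * ((K : ℝ) - 1))) := by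
    apply div_nonneg
    · exact mul_nonneg hδ0 (by linarith)
    · positivity
  linarith [part1, diff, hnn]
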